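/- An ordered abelian group Γ is regular if and only if Γ/Δ is divisible for every nonzero convex subgroup Δ of Γ. -/

import Mathlib

/-- An ordered abelian group is *regular* if for each positive integer `n`, every open
interval containing at least `n` elements contains an `n`-divisible element. -/
def IsRegularGroup (Γ : Type*) [AddCommGroup Γ] [LinearOrder Γ] [IsOrderedAddMonoid Γ] : Prop :=
  ∀ n : ℕ, 0 < n → ∀ α β : Γ, (∃ s : Finset Γ, s.card = n ∧ ↑s ⊆ Set.Ioo α β) →
    ∃ δ : Γ, n • δ ∈ Set.Ioo α β

section Aux

variable {G : Type*} [AddCommGroup G] [LinearOrder G] [IsOrderedAddMonoid G]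

/-- If `c > 0` and `|z|` is bounded by a multiple of `c`, then there is a least integer `k`
with `z < k • c`. -/
lemma exists_least_zsmul_gt (c z : G) (hc : 0 < c) (hz : ∃ N : ℕ, |z| ≤ N • c) :
    ∃ k : ℤ, z < k • c ∧ (k - 1) • c ≤ z := by
  obtain ⟨N, hN⟩ := hz
  have hinh : ∃ k : ℤ, z < k • c := by
    refine ⟨(N : ℤ) + 1, ?_⟩
    have h1 : z ≤ (N : ℤ) • c := by rw [natCast_zsmul]; exact (le_abs_self z).trans hN
    have h2 : ((N : ℤ) + 1) • c = (N : ℤ) • c + c := by rw [add_zsmul, one_zsmul]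
    rw [h2]
    exact lt_of_le_of_lt h1 (lt_add_of_pos_right _ hc)
  have hbdd : ∃ b : ℤ, ∀ k : ℤ, z < k • c → b ≤ k := by
    refine ⟨-(N : ℤ), fun k hk => ?_⟩
    by_contra h
    push_neg at h
    have h1 : k • c ≤ (-(N : ℤ)) • c := zsmul_le_zsmul_left hc.le h.le
    have h2 : (-(N : ℤ)) • c = -((N : ℤ) • c) := neg_zsmul c (N : ℤ)
    have h3 : -((N : ℤ) • c) ≤ z := by
      rw [natCast_zsmul]
      exact neg_le.mp ((neg_le_abs z).trans hN)
    have : k • c ≤ z := by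
      rw [h2] at h1; exact h1.trans h3
    exact absurd hk (not_lt.mpr this)
  obtain ⟨lb, hlb, hleast⟩ := Int.exists_least_of_bdd hbdd hinh
  refine ⟨lb, hlb, ?_⟩
  by_contra h
  push_neg at h
  have := hleast (lb - 1) h
  omega

/-- If every positive element `x` satisfies `t ≤ n • x` (with `t > 0`, `n > 0`),
then there is a least positive element. -/
lemma exists_min_pos (t : G) (ht : 0 < t) (n : ℕ) (hn : 0 < n)
    (hB : ∀ x : G, 0 < x → t ≤ n • x) : ∃ g : G, 0 < g ∧ ∀ p, 0 < p → g ≤ p := by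
  by_contra h
  push_neg at h
  have key : ∀ k : ℕ, ∃ y : G, 0 < y ∧ 2 ^ k • y ≤ t := by
    intro k
    induction k with
    | zero => exact ⟨t, ht, by simp⟩
    | succ k ih =>
      obtain ⟨y, hy, hle⟩ := ih
      obtain ⟨p, hp, hpy⟩ := h y hy
      have key2 : ∃ z : G, 0 < z ∧ 2 • z ≤ y := by
        rcases le_total p (y - p) with hc | hc
        · exact ⟨p, hp, by rw [two_nsmul]; exact le_sub_iff_add_le.mp hc⟩
        · refine ⟨y - p, sub_pos.mpr hpy, ?_⟩
          rw [two_nsmul]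
          calc y - p + (y - p) ≤ y - p + p := add_le_add_right hc _
            _ = y := sub_add_cancel y p
      obtain ⟨z, hz, hzy⟩ := key2
      refine ⟨z, hz, ?_⟩
      have h2 : 2 ^ (k + 1) • z = 2 ^ k • (2 • z) := by
        rw [← mul_nsmul', pow_succ]
      rw [h2]
      exact (nsmul_le_nsmul_right hzy _).trans hle
  obtain ⟨y, hy, hle⟩ := key (2 * n)
  have h2n : 2 * n ≤ 2 ^ (2 * n) := Nat.lt_two_pow_self.le
  have h1 : (2 * n) • y ≤ 2 ^ (2 * n) • y := nsmul_le_nsmul_left hy.le h2n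
  have h2 : t ≤ n • y := hB y hy
  have h3 : (2 * n) • y = n • y + n • y := by rw [two_mul, add_nsmul]
  have h4 : 0 < n • y := nsmul_pos hy hn.ne'
  have h5 : n • y + n • y ≤ n • y := by
    rw [← h3]
    exact (h1.trans hle).trans h2
  have h6 : n • y ≤ 0 := add_le_iff_nonpos_left.mp h5
  exact absurd h4 (not_lt.mpr h6)

end Aux

/-- An ordered abelian group `Γ` is regular if and only if `Γ/Δ` is divisible for every
nonzero convex subgroup `Δ` of `Γ`. -/
theorem regular_iff_quotients_divisible (Γ : Type*) [AddCommGroup Γ] [LinearOrder Γ] [IsOrderedAddMonoid Γ] :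
    IsRegularGroup Γ ↔
      ∀ Δ : AddSubgroup Γ, Δ ≠ ⊥ →
        (∀ γ δ : Γ, δ ∈ Δ → 0 ≤ γ → γ ≤ δ → γ ∈ Δ) →
        ∀ (x : Γ ⧸ Δ) (n : ℕ), 0 < n → ∃ y : Γ ⧸ Δ, n • y = x := by
  constructor
  · -- regular → quotients divisible
    intro hreg Δ hΔbot hconv x n hn
    obtain ⟨d₀, hd₀Δ, hd₀⟩ : ∃ d₀ ∈ Δ, d₀ ≠ 0 := by
      by_contra h
      push_neg at h
      exact hΔbot ((AddSubgroup.eq_bot_iff_forall Δ).mpr h)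
    have habs : |d₀| ∈ Δ := by
      rcases abs_choice d₀ with h | h
      · rw [h]; exact hd₀Δ
      · rw [h]; exact Δ.neg_mem hd₀Δ
    set d := |d₀| with hd
    have hdpos : 0 < d := abs_pos.mpr hd₀
    obtain ⟨γ, rfl⟩ := QuotientAddGroup.mk_surjective x
    have hex2 : ∃ s : Finset Γ, s.card = n ∧ ↑s ⊆ Set.Ioo (γ - n • d) (γ + n • d) := by
      refine ⟨(Finset.range n).image (fun k => γ + k • d), ?_, ?_⟩
      · rw [Finset.card_image_of_injective _ ?_, Finset.card_range]
        intro a b hab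
        simp only [add_right_inj] at hab
        by_contra hne
        rcases Nat.lt_or_ge a b with h | h
        · exact absurd hab (nsmul_lt_nsmul_left hdpos h).ne
        · have hba : b < a := lt_of_le_of_ne h (Ne.symm hne)
          exact absurd hab.symm (nsmul_lt_nsmul_left hdpos hba).ne
      · intro x hx
        simp only [Finset.coe_image, Set.mem_image, Finset.mem_coe, Finset.mem_range] at hx
        obtain ⟨k, hk, rfl⟩ := hx
        constructor
        · have h1 : (0:Γ) ≤ k • d := nsmul_nonneg hdpos.le k
          have h2 : γ - n • d < γ := sub_lt_self γ (nsmul_pos hdpos hn.ne')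
          exact h2.trans_le (le_add_of_nonneg_right h1)
        · exact add_lt_add_right (nsmul_lt_nsmul_left hdpos hk) γ
    obtain ⟨δ, hδ⟩ := hreg n hn (γ - n • d) (γ + n • d) hex2
    refine ⟨QuotientAddGroup.mk δ, ?_⟩
    · 
      obtain ⟨hl, hr⟩ := hδ
      have hsub : γ - n • δ ∈ Δ := by
        have h1 : |γ - n • δ| ≤ n • d := by
          refine (abs_sub_lt_iff.mpr ⟨?_, ?_⟩).le
          · exact sub_lt_comm.mp hl
          · exact sub_lt_iff_lt_add'.mpr hr
        have h2 : |γ - n • δ| ∈ Δ := hconv _ _ (AddSubgroup.nsmul_mem Δ habs n) (abs_nonneg _) h1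
        rcases abs_choice (γ - n • δ) with h | h
        · rw [← h]; exact h2
        · have h3 : γ - n • δ = -|γ - n • δ| := by rw [h, neg_neg]
          rw [h3]; exact Δ.neg_mem h2
      have hmk : (QuotientAddGroup.mk (n • δ) : Γ ⧸ Δ) = n • QuotientAddGroup.mk δ :=
        map_nsmul (QuotientAddGroup.mk' Δ) n δ
      rw [← hmk, QuotientAddGroup.eq_iff_sub_mem, ← neg_sub γ (n • δ)]
      exact Δ.neg_mem hsub
  · -- quotients divisible → regular
    intro hdiv n hn α β hex
    obtain ⟨s, hcard, hsub⟩ := hex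
    have hsne : s.Nonempty := Finset.card_pos.mp (hcard ▸ hn)
    obtain ⟨s₁, hs₁⟩ := hsne
    have hs₁m : s₁ ∈ Set.Ioo α β := hsub (Finset.mem_coe.mpr hs₁)
    set t := β - α with ht_def
    have ht : 0 < t := sub_pos.mpr (hs₁m.1.trans hs₁m.2)
    have hαt : α + t = β := by rw [ht_def]; abel
    by_cases hcase : ∃ ε : Γ, ε ≠ 0 ∧ ∀ m : ℕ, m • |ε| < t
    · -- Case 1: there is an element infinitesimal relative to t
      obtain ⟨ε₀, hε₀, hε₀small⟩ := hcase
      set Δ : AddSubgroup Γ :=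
        { carrier := {γ | ∀ m : ℕ, m • |γ| < t}
          zero_mem' := fun m => by simpa using ht
          add_mem' := by
            intro a b ha hb m
            have h1 : (2 * m) • |a| < t := ha _
            have h2 : (2 * m) • |b| < t := hb _
            have h3 : (2 * m) • |a| = m • |a| + m • |a| := by rw [two_mul, add_nsmul]
            have h4 : (2 * m) • |b| = m • |b| + m • |b| := by rw [two_mul, add_nsmul]
            have h5 : m • |a + b| ≤ m • (|a| + |b|) := nsmul_le_nsmul_right (abs_add_le a b) m
            have h6 : m • (|a| + |b|) = m • |a| + m • |b| := smul_add m |a| |b|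
            by_contra hcon
            push_neg at hcon
            have h7 : t ≤ m • |a| + m • |b| := by
              rw [← h6]; exact hcon.trans h5
            have h8 : t + t ≤ (m • |a| + m • |b|) + (m • |a| + m • |b|) := add_le_add h7 h7
            have h9 : (m • |a| + m • |b|) + (m • |a| + m • |b|)
                = (m • |a| + m • |a|) + (m • |b| + m • |b|) := by abel
            have h10 : (m • |a| + m • |a|) + (m • |b| + m • |b|) < t + t := by
              rw [← h3, ← h4]; exact add_lt_add h1 h2
            rw [h9] at h8
            exact absurd (h8.trans_lt h10) (lt_irrefl _)
          neg_mem' := by intro a ha m; simpa using ha m } with hΔdef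
      have hΔbot : Δ ≠ ⊥ := by
        intro h
        have hm : ε₀ ∈ Δ := hε₀small
        rw [h, AddSubgroup.mem_bot] at hm
        exact hε₀ hm
      have hconv : ∀ γ δ : Γ, δ ∈ Δ → 0 ≤ γ → γ ≤ δ → γ ∈ Δ := by
        intro γ δ hδ hγ0 hγδ m
        have h1 : |γ| ≤ |δ| := by
          rw [abs_of_nonneg hγ0, abs_of_nonneg (hγ0.trans hγδ)]; exact hγδ
        exact lt_of_le_of_lt (nsmul_le_nsmul_right h1 m) (hδ m)
      obtain ⟨y, hy⟩ := hdiv Δ hΔbot hconv (QuotientAddGroup.mk s₁) n hn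
      obtain ⟨δ₀, rfl⟩ := QuotientAddGroup.mk_surjective y
      have hmk : (QuotientAddGroup.mk (n • δ₀) : Γ ⧸ Δ) = n • QuotientAddGroup.mk δ₀ :=
        map_nsmul (QuotientAddGroup.mk' Δ) n δ₀
      rw [← hmk, QuotientAddGroup.eq_iff_sub_mem] at hy
      have hεn : n • |n • δ₀ - s₁| < t := hy n
      rcases le_or_gt (n • δ₀) α with hle | hgt
      · -- n • δ₀ ≤ α : shift up
        set e := s₁ - n • δ₀ with he_def
        have he : 0 < e := sub_pos.mpr (hle.trans_lt hs₁m.1)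
        have habs : |n • δ₀ - s₁| = e := by
          rw [he_def, ← neg_sub s₁ (n • δ₀), abs_neg, abs_of_pos he]
        rw [habs] at hεn
        have hsm : n • (δ₀ + e) = n • δ₀ + n • e := smul_add n δ₀ e
        have h2 : e ≤ n • e := by
          calc e = 1 • e := (one_nsmul e).symm
            _ ≤ n • e := nsmul_le_nsmul_left he.le hn
        refine ⟨δ₀ + e, ?_, ?_⟩
        · rw [Set.mem_Ioo] at *
          show α < n • (δ₀ + e)
          rw [hsm]
          have hs : s₁ = n • δ₀ + e := by rw [he_def]; abel
          calc α < s₁ := hs₁m.1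
            _ = n • δ₀ + e := hs
            _ ≤ n • δ₀ + n • e := add_le_add_right h2 _
        · show n • (δ₀ + e) < β
          rw [hsm]
          calc n • δ₀ + n • e ≤ α + n • e := add_le_add_left hle _
            _ < α + t := add_lt_add_right hεn α
            _ = β := hαt
      · rcases le_or_gt β (n • δ₀) with hge | hlt2
        · -- β ≤ n • δ₀ : shift down
          set e := n • δ₀ - s₁ with he_def
          have he : 0 < e := sub_pos.mpr (hs₁m.2.trans_le hge)
          have habs : |n • δ₀ - s₁| = e := abs_of_pos he
          rw [habs] at hεn
          have hsm : n • (δ₀ - e) = n • δ₀ - n • e := smul_sub n δ₀ e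
          have h2 : e ≤ n • e := by
            calc e = 1 • e := (one_nsmul e).symm
              _ ≤ n • e := nsmul_le_nsmul_left he.le hn
          refine ⟨δ₀ - e, ?_, ?_⟩
          · show α < n • (δ₀ - e)
            rw [hsm]
            have hβα : α = β - t := by rw [ht_def]; abel
            calc α = β - t := hβα
              _ < β - n • e := sub_lt_sub_left hεn β
              _ ≤ n • δ₀ - n • e := sub_le_sub_right hge _
          · show n • (δ₀ - e) < β
            rw [hsm]
            have hs : n • δ₀ - e = s₁ := by rw [he_def]; abel
            calc n • δ₀ - n • e ≤ n • δ₀ - e := sub_le_sub_left h2 _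
              _ = s₁ := hs
              _ < β := hs₁m.2
        · exact ⟨δ₀, hgt, hlt2⟩
    · -- Case 2: no element is infinitesimal relative to t
      push_neg at hcase
      set Δt : AddSubgroup Γ :=
        { carrier := {γ | ∃ m : ℕ, |γ| ≤ m • t}
          zero_mem' := ⟨0, by simp⟩
          add_mem' := by
            rintro a b ⟨m, hm⟩ ⟨m', hm'⟩
            exact ⟨m + m', (abs_add_le a b).trans (by rw [add_nsmul]; exact add_le_add hm hm')⟩
          neg_mem' := by rintro a ⟨m, hm⟩; exact ⟨m, by rwa [abs_neg]⟩ } with hΔtdef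
      have htmem : t ∈ Δt := ⟨1, by rw [one_nsmul, abs_of_pos ht]⟩
      have hΔtbot : Δt ≠ ⊥ := by
        intro h
        rw [h, AddSubgroup.mem_bot] at htmem
        exact ht.ne' htmem
      have hconvt : ∀ γ δ : Γ, δ ∈ Δt → 0 ≤ γ → γ ≤ δ → γ ∈ Δt := by
        rintro γ δ ⟨m, hm⟩ hγ0 hγδ
        refine ⟨m, ?_⟩
        have h1 : |γ| ≤ |δ| := by
          rw [abs_of_nonneg hγ0, abs_of_nonneg (hγ0.trans hγδ)]; exact hγδ
        exact h1.trans hm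
      obtain ⟨y, hy⟩ := hdiv Δt hΔtbot hconvt (QuotientAddGroup.mk α) n hn
      obtain ⟨δ₀, rfl⟩ := QuotientAddGroup.mk_surjective y
      have hmk : (QuotientAddGroup.mk (n • δ₀) : Γ ⧸ Δt) = n • QuotientAddGroup.mk δ₀ :=
        map_nsmul (QuotientAddGroup.mk' Δt) n δ₀
      rw [← hmk, QuotientAddGroup.eq_iff_sub_mem] at hy
      obtain ⟨M, hM⟩ : ∃ m : ℕ, |n • δ₀ - α| ≤ m • t := hy
      by_cases hA : ∃ x : Γ, 0 < n • x ∧ n • x < t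
      · -- Sub-case A: there is a small positive n-divisible element
        obtain ⟨x, hx1, hx2⟩ := hA
        obtain ⟨m, hm⟩ := hcase (n • x) hx1.ne'
        rw [abs_of_pos hx1] at hm
        have hz : |α - n • δ₀| ≤ (M * m) • (n • x) := by
          rw [abs_sub_comm]
          calc |n • δ₀ - α| ≤ M • t := hM
            _ ≤ M • (m • (n • x)) := nsmul_le_nsmul_right hm M
            _ = (M * m) • (n • x) := (mul_nsmul' (n • x) M m).symm
        obtain ⟨k, hk1, hk2⟩ := exists_least_zsmul_gt (n • x) (α - n • δ₀) hx1 ⟨M * m, hz⟩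
        have hns : n • (δ₀ + k • x) = n • δ₀ + k • (n • x) := by
          rw [smul_add]
          congr 1
          calc n • (k • x) = (n : ℤ) • (k • x) := (natCast_zsmul (k • x) n).symm
            _ = ((n : ℤ) * k) • x := (mul_zsmul x (n : ℤ) k).symm
            _ = (k * (n : ℤ)) • x := by rw [mul_comm]
            _ = k • ((n : ℤ) • x) := mul_zsmul x k (n : ℤ)
            _ = k • (n • x) := by rw [natCast_zsmul]
        refine ⟨δ₀ + k • x, ?_, ?_⟩
        · show α < n • (δ₀ + k • x)
          rw [hns]
          have h1 : α < k • (n • x) + n • δ₀ := sub_lt_iff_lt_add.mp hk1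
          rw [add_comm] at h1
          exact h1
        · show n • (δ₀ + k • x) < β
          rw [hns]
          have hkc : k • (n • x) = (k - 1) • (n • x) + n • x := by
            rw [sub_zsmul, one_zsmul]; abel
          rw [hkc]
          have e1 : n • δ₀ + ((k - 1) • (n • x) + n • x) ≤ n • δ₀ + ((α - n • δ₀) + n • x) :=
            add_le_add_right (add_le_add_left hk2 _) _
          have e2 : n • δ₀ + ((α - n • δ₀) + n • x) = α + n • x := by abel
          have e3 : α + n • x < α + t := add_lt_add_right hx2 α
          calc n • δ₀ + ((k - 1) • (n • x) + n • x) ≤ α + n • x := by rw [← e2]; exact e1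
            _ < α + t := e3
            _ = β := hαt
      · -- Sub-case B: discrete case
        push_neg at hA
        have hB : ∀ x : Γ, 0 < x → t ≤ n • x := fun x hx => hA x (nsmul_pos hx hn.ne')
        obtain ⟨g, hg, hgmin⟩ := exists_min_pos t ht n hn hB
        obtain ⟨mg, hmg⟩ := hcase g hg.ne'
        rw [abs_of_pos hg] at hmg
        have hmul : ∀ z : Γ, (∃ Mz : ℕ, |z| ≤ Mz • t) → ∃ k : ℤ, z = k • g := by
          rintro z ⟨Mz, hMz⟩
          have hzbd : |z| ≤ (Mz * mg) • g := by
            calc |z| ≤ Mz • t := hMz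
              _ ≤ Mz • (mg • g) := nsmul_le_nsmul_right hmg Mz
              _ = (Mz * mg) • g := (mul_nsmul' g Mz mg).symm
          obtain ⟨k, hk1, hk2⟩ := exists_least_zsmul_gt g z hg ⟨Mz * mg, hzbd⟩
          refine ⟨k - 1, ?_⟩
          have hd0 : 0 ≤ z - (k - 1) • g := sub_nonneg.mpr hk2
          have hkg : k • g = (k - 1) • g + g := by
            rw [sub_zsmul, one_zsmul]; abel
          have hdg : z - (k - 1) • g < g := by
            rw [hkg] at hk1
            exact sub_lt_iff_lt_add'.mpr hk1
          rcases eq_or_lt_of_le hd0 with h | h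
          · rw [← sub_eq_zero]; exact h.symm
          · exact absurd (hgmin _ h) (not_le.mpr hdg)
        have hsel : ∀ x ∈ s, ∃ k : ℤ, x - n • δ₀ = k • g := by
          intro x hxs
          apply hmul
          refine ⟨M + 1, ?_⟩
          have hxio : x ∈ Set.Ioo α β := hsub (Finset.mem_coe.mpr hxs)
          have h1 : |x - n • δ₀| ≤ |x - α| + |α - n • δ₀| := abs_sub_le x α (n • δ₀)
          have h2 : |x - α| ≤ t := by
            rw [abs_of_pos (sub_pos.mpr hxio.1), ht_def]
            exact sub_le_sub_right hxio.2.le α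
          have h3 : |α - n • δ₀| ≤ M • t := by rw [abs_sub_comm]; exact hM
          have h4 : (M + 1) • t = M • t + t := succ_nsmul t M
          calc |x - n • δ₀| ≤ |x - α| + |α - n • δ₀| := h1
            _ ≤ t + M • t := add_le_add h2 h3
            _ = M • t + t := add_comm _ _
            _ = (M + 1) • t := h4.symm
        classical
        set f : Γ → ℤ := fun x => if h : ∃ k : ℤ, x - n • δ₀ = k • g then h.choose else 0 with hf
        have hfspec : ∀ x ∈ s, x = n • δ₀ + f x • g := by
          intro x hx
          have h := hsel x hx
          have hspec := h.choose_spec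
          rw [hf]
          simp only [dif_pos h]
          rw [← hspec]
          abel
        have hfinj : Set.InjOn f ↑s := by
          intro a ha b hb hab
          have h1 := hfspec a (Finset.mem_coe.mp ha)
          have h2 := hfspec b (Finset.mem_coe.mp hb)
          rw [h1, h2, hab]
        set T := s.image f with hT
        have hTcard : T.card = n := by
          rw [hT, Finset.card_image_of_injOn hfinj, hcard]
        have hTne : T.Nonempty := by
          rw [← Finset.card_pos, hTcard]; exact hn
        set kmin := T.min' hTne with hkmin
        set kmax := T.max' hTne with hkmax
        have hminmax : kmin ≤ kmax := T.min'_le kmax (T.max'_mem hTne)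
        have hrange : kmin + (n : ℤ) - 1 ≤ kmax := by
          have hsubT : T ⊆ Finset.Icc kmin kmax := fun k hk =>
            Finset.mem_Icc.mpr ⟨T.min'_le k hk, T.le_max' k hk⟩
          have hcardle := Finset.card_le_card hsubT
          rw [hTcard, Int.card_Icc] at hcardle
          omega
        obtain ⟨xmin, hxmin_s, hxmin⟩ := Finset.mem_image.mp (T.min'_mem hTne)
        obtain ⟨xmax, hxmax_s, hxmax⟩ := Finset.mem_image.mp (T.max'_mem hTne)
        rw [← hkmin] at hxmin
        rw [← hkmax] at hxmax
        have hαmin : α < n • δ₀ + kmin • g := by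
          rw [← hxmin, ← hfspec xmin hxmin_s]
          exact (hsub (Finset.mem_coe.mpr hxmin_s)).1
        have hmaxβ : n • δ₀ + kmax • g < β := by
          rw [← hxmax, ← hfspec xmax hxmax_s]
          exact (hsub (Finset.mem_coe.mpr hxmax_s)).2
        -- find a multiple of n in [kmin, kmax]
        obtain ⟨k, hdvd, hklo, hkhi⟩ : ∃ k : ℤ, (n : ℤ) ∣ k ∧ kmin ≤ k ∧ k ≤ kmax := by
          have hnz : (n : ℤ) ≠ 0 := by exact_mod_cast hn.ne'
          have hn1 : (1 : ℤ) ≤ (n : ℤ) := by exact_mod_cast hn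
          have hr0 : 0 ≤ kmin % (n : ℤ) := Int.emod_nonneg kmin hnz
          have hrn : kmin % (n : ℤ) < (n : ℤ) :=
            Int.emod_lt_of_pos kmin (by exact_mod_cast hn)
          have hediv := Int.mul_ediv_add_emod kmin (n : ℤ)
          have hdvd1 : (n : ℤ) ∣ kmin - kmin % (n : ℤ) :=
            ⟨kmin / (n : ℤ), by linarith⟩
          by_cases hr : kmin % (n : ℤ) = 0
          · refine ⟨kmin, ?_, le_refl _, hminmax⟩
            rw [hr, sub_zero] at hdvd1
            exact hdvd1
          · have hr1 : 1 ≤ kmin % (n : ℤ) := lt_of_le_of_ne hr0 (Ne.symm hr)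
            refine ⟨kmin + ((n : ℤ) - kmin % (n : ℤ)), ?_, by linarith, by linarith⟩
            have heq : kmin + ((n : ℤ) - kmin % (n : ℤ)) = (kmin - kmin % (n : ℤ)) + n := by ring
            rw [heq]
            exact dvd_add hdvd1 dvd_rfl
        obtain ⟨q, hq⟩ := hdvd
        have hns : n • (δ₀ + q • g) = n • δ₀ + k • g := by
          rw [smul_add]
          congr 1
          calc n • (q • g) = (n : ℤ) • (q • g) := (natCast_zsmul (q • g) n).symm
            _ = ((n : ℤ) * q) • g := (mul_zsmul g (n : ℤ) q).symm
            _ = k • g := by rw [← hq]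
        refine ⟨δ₀ + q • g, ?_, ?_⟩
        · show α < n • (δ₀ + q • g)
          rw [hns]
          exact hαmin.trans_le (add_le_add_right (zsmul_le_zsmul_left hg.le hklo) _)
        · show n • (δ₀ + q • g) < β
          rw [hns]
          exact (add_le_add_right (zsmul_le_zsmul_left hg.le hkhi) _).trans_lt hmaxβ
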